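/- For every integer p, the family indexed by q ∈ ℤ⁴ given by q ↦ 1/A_p(q)² − 1/A_0(q)² is summable. (The termwise subtraction of its value at zero external momentum renders the one-loop melonic four-point function ultraviolet finite, which is the one-loop content of the renormalized four-point equation.) -/

import Mathlib

open scoped BigOperators

/-- The gauge-constrained propagator denominator: `A m p q = |q⃗|² + m²` for a momentum
`q⃗ ∈ ℤ⁶` with one component fixed to `p`, four free components `q`, and the last component
`-(p + S q)` determined by the closure constraint. -/
noncomputable def A (m : ℝ) (p : ℤ) (q : Fin 4 → ℤ) : ℝ :=
  (p : ℝ) ^ 2 + (∑ i, ((q i : ℝ)) ^ 2) + ((p : ℝ) + ∑ i, (q i : ℝ)) ^ 2 + m ^ 2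


lemma gsum1d : Summable (fun n : ℤ => (1 + (n : ℝ) ^ 2) ^ (-(5/8 : ℝ))) := by
  have hnat : Summable (fun n : ℕ => (1 + (n : ℝ) ^ 2) ^ (-(5/8 : ℝ))) := by
    have h0 : Summable (fun n : ℕ => ((n : ℝ)) ^ (-(5/4 : ℝ))) :=
      Real.summable_nat_rpow.mpr (by norm_num)
    have h1 : Summable (fun n : ℕ => ((n : ℝ) + 1) ^ (-(5/4 : ℝ))) := by
      have := (summable_nat_add_iff 1).mpr h0
      simpa [Nat.cast_add] using this
    refine Summable.of_nonneg_of_le (fun n => by positivity) (fun n => ?_)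
      (h1.mul_left ((2 : ℝ) ^ (5/8 : ℝ)))
    have hx : (0 : ℝ) < (n : ℝ) + 1 := by positivity
    have hle : ((n : ℝ) + 1) ^ 2 / 2 ≤ 1 + (n : ℝ) ^ 2 := by nlinarith [sq_nonneg ((n:ℝ) - 1)]
    calc (1 + (n : ℝ) ^ 2) ^ (-(5/8 : ℝ))
        ≤ (((n : ℝ) + 1) ^ 2 / 2) ^ (-(5/8 : ℝ)) :=
          Real.rpow_le_rpow_of_nonpos (by positivity) hle (by norm_num)
      _ = (2 : ℝ) ^ (5/8 : ℝ) * ((n : ℝ) + 1) ^ (-(5/4 : ℝ)) := by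
          rw [Real.div_rpow (by positivity) (by norm_num),
            ← Real.rpow_natCast ((n:ℝ)+1) 2, ← Real.rpow_mul hx.le]
          norm_num
          rw [Real.rpow_neg (by norm_num : (0:ℝ) ≤ 2)]
          field_simp
  apply Summable.of_nat_of_neg <;> simpa using hnat

lemma gsum4 : Summable (fun q : Fin 4 → ℤ => ∏ i, (1 + (q i : ℝ) ^ 2) ^ (-(5/8 : ℝ))) := by
  set g : ℤ → ℝ := fun n => (1 + (n : ℝ) ^ 2) ^ (-(5/8 : ℝ)) with hg
  have hg0 : ∀ n, 0 ≤ g n := fun n => by positivity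
  have h2 : Summable (fun x : ℤ × ℤ => g x.1 * g x.2) :=
    gsum1d.mul_of_nonneg gsum1d hg0 hg0
  have h4 : Summable (fun x : (ℤ × ℤ) × (ℤ × ℤ) => (g x.1.1 * g x.1.2) * (g x.2.1 * g x.2.2)) :=
    h2.mul_of_nonneg h2 (fun x => mul_nonneg (hg0 _) (hg0 _)) (fun x => mul_nonneg (hg0 _) (hg0 _))
  let e : ((ℤ × ℤ) × (ℤ × ℤ)) ≃ (Fin 4 → ℤ) :=
    { toFun := fun x => ![x.1.1, x.1.2, x.2.1, x.2.2]
      invFun := fun q => ((q 0, q 1), (q 2, q 3))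
      left_inv := fun x => rfl
      right_inv := fun q => by funext i; fin_cases i <;> rfl }
  rw [← e.summable_iff]
  refine h4.congr fun x => ?_
  simp [e, Fin.prod_univ_four, hg, mul_assoc, Equiv.coe_fn_mk]
  rfl

lemma key_bound (m pp s S : ℝ) (hm : 0 < m) (hs0 : 0 ≤ s) (hS4 : S ^ 2 ≤ 4 * s) :
    |1 / (pp ^ 2 + s + (pp + S) ^ 2 + m ^ 2) ^ 2 - 1 / (s + S ^ 2 + m ^ 2) ^ 2|
      ≤ (150 * (pp ^ 2 / m + |pp|) * (pp ^ 2 / m ^ 2 + 1)) * Real.sqrt (s + S ^ 2 + m ^ 2)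
          / (s + S ^ 2 + m ^ 2) ^ 3 := by
  set B : ℝ := s + S ^ 2 + m ^ 2 with hB
  set P : ℝ := pp ^ 2 + s + (pp + S) ^ 2 + m ^ 2 with hP
  have hmB : m ^ 2 ≤ B := by nlinarith [sq_nonneg S]
  have hB0 : 0 < B := lt_of_lt_of_le (by positivity) hmB
  have hmP : m ^ 2 ≤ P := by nlinarith [sq_nonneg (pp + S), sq_nonneg pp]
  have hP0 : 0 < P := lt_of_lt_of_le (by positivity) hmP
  set t : ℝ := Real.sqrt B with ht
  have ht0 : 0 < t := Real.sqrt_pos.mpr hB0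
  have ht2 : t ^ 2 = B := Real.sq_sqrt hB0.le
  have hmt : m ≤ t := by nlinarith
  have hSt : |S| ≤ t := by nlinarith [sq_abs S, abs_nonneg S, sq_nonneg m]
  have hB5P : B ≤ 5 * P := by nlinarith [sq_nonneg (pp + S), sq_nonneg pp, sq_nonneg m]
  have hne : 1 / P ^ 2 - 1 / B ^ 2 = (B ^ 2 - P ^ 2) / (P ^ 2 * B ^ 2) := by
    field_simp
  rw [hne, abs_div, abs_of_pos (by positivity : (0:ℝ) < P ^ 2 * B ^ 2)]
  have hnum : |B ^ 2 - P ^ 2|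
      ≤ (2 * (pp ^ 2 / m + |pp|) * t) * (3 * (pp ^ 2 / m ^ 2 + 1) * B) := by
    have h1 : B ^ 2 - P ^ 2 = (B - P) * (B + P) := by ring
    rw [h1, abs_mul]
    have hBP : |B - P| ≤ 2 * (pp ^ 2 / m + |pp|) * t := by
      have he : B - P = -(2 * pp ^ 2 + 2 * pp * S) := by rw [hB, hP]; ring
      rw [he, abs_neg]
      have e1 : |2 * pp ^ 2 + 2 * pp * S| ≤ 2 * pp ^ 2 + 2 * |pp| * |S| := by
        calc |2 * pp ^ 2 + 2 * pp * S| ≤ |2 * pp ^ 2| + |2 * pp * S| := abs_add_le _ _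
          _ = 2 * pp ^ 2 + 2 * |pp| * |S| := by
              rw [abs_of_nonneg (by positivity), abs_mul, abs_mul, abs_two]
      have hdiv : pp ^ 2 = (pp ^ 2 / m) * m := by field_simp
      have h2 : (pp ^ 2 / m) * m ≤ (pp ^ 2 / m) * t :=
        mul_le_mul_of_nonneg_left hmt (by positivity)
      have h3 : 2 * |pp| * |S| ≤ 2 * |pp| * t :=
        mul_le_mul_of_nonneg_left hSt (by positivity)
      linarith [e1, h2, h3, hdiv]
    have hBPsum : B + P ≤ 3 * (pp ^ 2 / m ^ 2 + 1) * B := by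
      have h3 : P ≤ 3 * pp ^ 2 + 2 * B := by rw [hB, hP]; nlinarith [sq_nonneg (pp - S)]
      have hdiv2 : pp ^ 2 = (pp ^ 2 / m ^ 2) * m ^ 2 := by field_simp
      have h4 : (pp ^ 2 / m ^ 2) * m ^ 2 ≤ (pp ^ 2 / m ^ 2) * B :=
        mul_le_mul_of_nonneg_left hmB (by positivity)
      linarith [h3, h4, hdiv2]
    have habs : |B + P| = B + P := abs_of_pos (by positivity)
    rw [habs] at *
    exact mul_le_mul hBP hBPsum (by positivity) (by positivity)
  have hden : (B / 5) ^ 2 * B ^ 2 ≤ P ^ 2 * B ^ 2 := by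
    have h5 : B / 5 ≤ P := by linarith
    have h6 : (B / 5) ^ 2 ≤ P ^ 2 := pow_le_pow_left₀ (by positivity) h5 2
    exact mul_le_mul_of_nonneg_right h6 (by positivity)
  calc |B ^ 2 - P ^ 2| / (P ^ 2 * B ^ 2)
      ≤ ((2 * (pp ^ 2 / m + |pp|) * t) * (3 * (pp ^ 2 / m ^ 2 + 1) * B))
          / ((B / 5) ^ 2 * B ^ 2) := div_le_div₀ (by positivity) hnum (by positivity) hden
    _ = (150 * (pp ^ 2 / m + |pp|) * (pp ^ 2 / m ^ 2 + 1)) * t / B ^ 3 := by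
        field_simp
        ring


lemma cs4 (q : Fin 4 → ℤ) : (∑ i, (q i : ℝ)) ^ 2 ≤ 4 * ∑ i, ((q i : ℝ)) ^ 2 := by
  rw [Fin.sum_univ_four, Fin.sum_univ_four]
  nlinarith [sq_nonneg ((q 0 : ℝ) - q 1), sq_nonneg ((q 0 : ℝ) - q 2), sq_nonneg ((q 0 : ℝ) - q 3),
    sq_nonneg ((q 1 : ℝ) - q 2), sq_nonneg ((q 1 : ℝ) - q 3), sq_nonneg ((q 2 : ℝ) - q 3)]

lemma step2 (m : ℝ) (hm : 0 < m) (q : Fin 4 → ℤ) :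
    Real.sqrt ((∑ i, ((q i : ℝ)) ^ 2) + (∑ i, (q i : ℝ)) ^ 2 + m ^ 2)
        / ((∑ i, ((q i : ℝ)) ^ 2) + (∑ i, (q i : ℝ)) ^ 2 + m ^ 2) ^ 3
      ≤ ((min 1 (m ^ 2 / 4)) ^ 4) ^ (-(5/8 : ℝ)) * ∏ i, (1 + (q i : ℝ) ^ 2) ^ (-(5/8 : ℝ)) := by
  set s : ℝ := ∑ i, ((q i : ℝ)) ^ 2 with hs
  set S : ℝ := ∑ i, (q i : ℝ) with hSdef
  set B : ℝ := s + S ^ 2 + m ^ 2 with hB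
  set c : ℝ := min 1 (m ^ 2 / 4) with hc
  have hc0 : 0 < c := lt_min one_pos (by positivity)
  have hs0 : 0 ≤ s := Finset.sum_nonneg fun i _ => sq_nonneg _
  have hB0 : 0 < B := by positivity
  have ha : ∀ i : Fin 4, (0:ℝ) < 1 + (q i : ℝ) ^ 2 := fun i => by positivity
  have hprod_pos : 0 < ∏ i, (1 + (q i : ℝ) ^ 2) := Finset.prod_pos fun i _ => ha i
  set T : ℝ := ∑ i, (1 + (q i : ℝ) ^ 2) with hT
  have hsum : T = 4 + s := by
    rw [hT, Finset.sum_add_distrib]; simp [hs]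
  have hle : ∀ i : Fin 4, 1 + (q i : ℝ) ^ 2 ≤ T := fun i => by
    rw [hT]
    exact Finset.single_le_sum (fun j _ => (ha j).le) (Finset.mem_univ i)
  have hT0 : 0 ≤ T := by rw [hsum]; linarith
  have hprodle : ∏ i, (1 + (q i : ℝ) ^ 2) ≤ T ^ 4 := by
    rw [Fin.prod_univ_four]
    calc (1 + (q 0 : ℝ) ^ 2) * (1 + (q 1 : ℝ) ^ 2) * (1 + (q 2 : ℝ) ^ 2) * (1 + (q 3 : ℝ) ^ 2)
        ≤ T * T * T * T := by
          apply mul_le_mul (mul_le_mul (mul_le_mul (hle 0) (hle 1) (ha 1).le ?_) (hle 2)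
            (ha 2).le ?_) (hle 3) (ha 3).le ?_ <;> positivity
      _ = T ^ 4 := by ring
  have hTs : c * T ≤ B := by
    have h1 : c ≤ 1 := min_le_left _ _
    have h2 : c ≤ m ^ 2 / 4 := min_le_right _ _
    rw [hsum]
    nlinarith [sq_nonneg S]
  have hB4 : c ^ 4 * ∏ i, (1 + (q i : ℝ) ^ 2) ≤ B ^ 4 := by
    have h7 : c ^ 4 * ∏ i, (1 + (q i : ℝ) ^ 2) ≤ c ^ 4 * T ^ 4 :=
      mul_le_mul_of_nonneg_left hprodle (by positivity)
    have h8 : (c * T) ^ 4 ≤ B ^ 4 :=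
      pow_le_pow_left₀ (mul_nonneg hc0.le hT0) hTs 4
    calc c ^ 4 * ∏ i, (1 + (q i : ℝ) ^ 2) ≤ c ^ 4 * T ^ 4 := h7
      _ = (c * T) ^ 4 := by ring
      _ ≤ B ^ 4 := h8
  have ht3 : Real.sqrt B / B ^ 3 = B ^ (-(5/2 : ℝ)) := by
    rw [Real.sqrt_eq_rpow, ← Real.rpow_natCast B 3, ← Real.rpow_sub hB0]
    norm_num
  have hB5 : B ^ (-(5/2 : ℝ)) = (B ^ 4) ^ (-(5/8 : ℝ)) := by
    rw [← Real.rpow_natCast B 4, ← Real.rpow_mul hB0.le]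
    norm_num
  calc Real.sqrt B / B ^ 3 = (B ^ 4) ^ (-(5/8 : ℝ)) := by rw [ht3, hB5]
    _ ≤ (c ^ 4 * ∏ i, (1 + (q i : ℝ) ^ 2)) ^ (-(5/8 : ℝ)) :=
        Real.rpow_le_rpow_of_nonpos (mul_pos (pow_pos hc0 4) hprod_pos) hB4 (by norm_num)
    _ = (c ^ 4) ^ (-(5/8 : ℝ)) * ∏ i, (1 + (q i : ℝ) ^ 2) ^ (-(5/8 : ℝ)) := by
        rw [Real.mul_rpow (by positivity) hprod_pos.le,
          Real.finset_prod_rpow _ _ (fun i _ => (ha i).le)]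

/-- The termwise subtraction of its value at zero external momentum renders the one-loop
melonic four-point function UV finite. -/
theorem renormalized_four_point_summable (m : ℝ) (hm : 0 < m) (p : ℤ) :
    Summable (fun q : Fin 4 → ℤ => 1 / (A m p q) ^ 2 - 1 / (A m 0 q) ^ 2) := by
  set K : ℝ := 150 * ((p : ℝ) ^ 2 / m + |(p : ℝ)|) * ((p : ℝ) ^ 2 / m ^ 2 + 1) with hK
  have hK0 : 0 ≤ K := by positivity
  set C : ℝ := ((min 1 (m ^ 2 / 4)) ^ 4) ^ (-(5/8 : ℝ)) with hC
  have hC0 : 0 ≤ C := Real.rpow_nonneg (by positivity) _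
  refine Summable.of_norm_bounded (gsum4.mul_left (K * C)) fun q => ?_
  have hA0 : A m 0 q = (∑ i, ((q i : ℝ)) ^ 2) + (∑ i, (q i : ℝ)) ^ 2 + m ^ 2 := by
    simp [A]
  have hAp : A m p q
      = (p : ℝ) ^ 2 + (∑ i, ((q i : ℝ)) ^ 2) + ((p : ℝ) + ∑ i, (q i : ℝ)) ^ 2 + m ^ 2 := rfl
  have key := key_bound m (p : ℝ) (∑ i, ((q i : ℝ)) ^ 2) (∑ i, (q i : ℝ)) hm
    (Finset.sum_nonneg fun i _ => sq_nonneg _) (cs4 q)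
  have h2 := step2 m hm q
  rw [Real.norm_eq_abs, hAp, hA0]
  refine le_trans key ?_
  calc (150 * ((p : ℝ) ^ 2 / m + |(p : ℝ)|) * ((p : ℝ) ^ 2 / m ^ 2 + 1))
        * Real.sqrt ((∑ i, ((q i : ℝ)) ^ 2) + (∑ i, (q i : ℝ)) ^ 2 + m ^ 2)
        / ((∑ i, ((q i : ℝ)) ^ 2) + (∑ i, (q i : ℝ)) ^ 2 + m ^ 2) ^ 3
      = K * (Real.sqrt ((∑ i, ((q i : ℝ)) ^ 2) + (∑ i, (q i : ℝ)) ^ 2 + m ^ 2)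
          / ((∑ i, ((q i : ℝ)) ^ 2) + (∑ i, (q i : ℝ)) ^ 2 + m ^ 2) ^ 3) := by
        rw [hK]; ring
    _ ≤ K * (C * ∏ i, (1 + (q i : ℝ) ^ 2) ^ (-(5/8 : ℝ))) :=
        mul_le_mul_of_nonneg_left h2 hK0
    _ = K * C * ∏ i, (1 + (q i : ℝ) ^ 2) ^ (-(5/8 : ℝ)) := by ring
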